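/- Let (α, dist) be a metric space, let V be a finite nonempty subset of α, and let s : ℕ → α be a farthest-point-sampling sequence for V: s(i) ∈ V for all i, and for every i and every v ∈ V, inf_{0 ≤ j ≤ i} dist(v, s(j)) ≤ inf_{0 ≤ j ≤ i} dist(s(i+1), s(j)). Then for every k ≥ 1 and every nonempty subset T ⊆ V with |T| = k, sup_{v∈V} inf_{0 ≤ j < k} dist(v, s(j)) ≤ 2 · sup_{v∈V} inf_{t∈T} dist(v, t). -/

import Mathlib

/-- Farthest point sampling achieves a 2-approximation for the k-center
covering radius. -/
theorem fps_two_approximation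
    {α : Type*} [MetricSpace α] (V : Finset α) (hV : V.Nonempty)
    (s : ℕ → α) (hs : ∀ i, s i ∈ V)
    (hgreedy : ∀ i, ∀ v ∈ V,
      (Finset.range (i + 1)).inf' Finset.nonempty_range_add_one
          (fun j => dist v (s j)) ≤
        (Finset.range (i + 1)).inf' Finset.nonempty_range_add_one
          (fun j => dist (s (i + 1)) (s j))) :
    ∀ k : ℕ, ∀ hk : 1 ≤ k, ∀ T : Finset α, T ⊆ V → ∀ hT : T.Nonempty,
      T.card = k →
      V.sup' hV (fun v =>
          (Finset.range k).inf'
            (Finset.nonempty_range_iff.mpr (by omega))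
            (fun j => dist v (s j))) ≤
        2 * V.sup' hV (fun v => T.inf' hT (fun t => dist v t)) := by
  intro k hk T hTV hT hcard
  have hk0 : 0 < k := hk
  have hne : (Finset.range k).Nonempty := Finset.nonempty_range_iff.mpr (by omega)
  obtain ⟨v, hvV, hv⟩ := Finset.exists_mem_eq_sup' hV
    (fun v => (Finset.range k).inf' hne (fun j => dist v (s j)))
  set r := V.sup' hV (fun v => T.inf' hT (fun t => dist v t)) with hrdef
  set R := (Finset.range k).inf' hne (fun j => dist v (s j)) with hRdef
  have hgoal : R ≤ 2 * r := by
    -- every point of V has a center in T within distance r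
    have hnear : ∀ p ∈ V, ∃ t ∈ T, dist p t ≤ r := by
      intro p hp
      obtain ⟨t, htT, ht⟩ := Finset.exists_mem_eq_inf' hT (fun t => dist p t)
      refine ⟨t, htT, ?_⟩
      have := Finset.le_sup' (fun v => T.inf' hT (fun t => dist v t)) hp
      rw [ht] at this
      exact this
    choose c hcT hcd using hnear
    have hRle : ∀ m, m < k → R ≤ dist v (s m) := by
      intro m hm
      exact Finset.inf'_le _ (Finset.mem_range.mpr hm)
    -- pairwise distances among s 0, ..., s (k-1) are ≥ R
    have pair : ∀ i j, i < j → j < k → R ≤ dist (s i) (s j) := by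
      intro i j hij hjk
      obtain ⟨m, rfl⟩ : ∃ m, j = m + 1 := ⟨j - 1, by omega⟩
      have h1 : R ≤ (Finset.range (m + 1)).inf' Finset.nonempty_range_add_one
          (fun j => dist v (s j)) := by
        apply Finset.le_inf'
        intro b hb
        exact hRle b (by have := Finset.mem_range.mp hb; omega)
      have h2 := hgreedy m v hvV
      have h3 : (Finset.range (m + 1)).inf' Finset.nonempty_range_add_one
          (fun j => dist (s (m + 1)) (s j)) ≤ dist (s (m + 1)) (s i) :=
        Finset.inf'_le _ (Finset.mem_range.mpr (by omega))
      calc R ≤ _ := h1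
        _ ≤ _ := h2
        _ ≤ dist (s (m + 1)) (s i) := h3
        _ = dist (s i) (s (m + 1)) := dist_comm _ _
    -- the k+1 points
    set g : ℕ → α := fun n => if n < k then s n else v with hg
    have hgV : ∀ n, g n ∈ V := by
      intro n
      by_cases h : n < k <;> simp only [hg, h, if_true, if_false] <;>
        first | exact hs n | exact hvV
    have aux : ∀ i j, i < j → j < k + 1 → R ≤ dist (g i) (g j) := by
      intro i j hij hjk
      by_cases hj : j < k
      · have hi : i < k := by omega
        simp only [hg, hi, hj, if_true]
        exact pair i j hij hj
      · have hjeq : j = k := by omega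
        have hi : i < k := by omega
        simp only [hg, hi, hjeq, lt_irrefl, if_true, if_false]
        rw [dist_comm]
        exact hRle i hi
    have hpair : ∀ i ∈ Finset.range (k + 1), ∀ j ∈ Finset.range (k + 1),
        i ≠ j → R ≤ dist (g i) (g j) := by
      intro i hi j hj hij
      rcases lt_or_gt_of_ne hij with h | h
      · exact aux i j h (Finset.mem_range.mp hj)
      · rw [dist_comm]
        exact aux j i h (Finset.mem_range.mp hi)
    -- pigeonhole on nearest centers
    obtain ⟨i, hi, j, hj, hij, heq⟩ :=
      Finset.exists_ne_map_eq_of_card_lt_of_maps_to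
        (s := Finset.range (k + 1)) (t := T)
        (by simp [hcard]) (fun n _ => hcT (g n) (hgV n))
    calc R ≤ dist (g i) (g j) := hpair i hi j hj hij
      _ ≤ dist (g i) (c (g i) (hgV i)) + dist (c (g i) (hgV i)) (g j) :=
        dist_triangle _ _ _
      _ ≤ r + r := by
          gcongr
          · exact hcd (g i) (hgV i)
          · rw [dist_comm, heq]; exact hcd (g j) (hgV j)
      _ = 2 * r := by ring
  rw [hv]
  exact hgoal
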